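/- Let p > 1, γ > 1, C > 0, let Ω ⊆ ℝ^N be an open set, and let v, u : Ω → ℝ be C¹ and positive on Ω. Assume that for every nonnegative Lipschitz function φ : ℝ^N → ℝ with compact support contained in Ω one has ∫_Ω ‖∇v‖^{p−2} ⟨∇v, ∇φ⟩ ≤ C ∫_Ω v^{−γ} φ (v is a subsolution) and ∫_Ω ‖∇u‖^{p−2} ⟨∇u, ∇φ⟩ ≥ C ∫_Ω u^{−γ} φ (u is a supersolution), where ∇φ denotes the almost-everywhere defined Fréchet derivative of φ. If ε > 0 is such that the closure of the set {x ∈ Ω : v(x) > u(x) + ε} is compact and contained in Ω, then v ≤ u + ε on Ω. -/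

import Mathlib

open MeasureTheory



lemma measurable_rpow_const' (c : ℝ) : Measurable fun x : ℝ => x ^ c :=
  measurable_of_continuousOn_compl_singleton 0
    (fun x hx => (Real.continuousAt_rpow_const x c (Or.inl hx)).continuousWithinAt)

lemma pLap_bound {E : Type*} [NormedAddCommGroup E] [InnerProductSpace ℝ E]
    {p : ℝ} (a c : E) :
    |‖a‖ ^ (p - 2) * (inner ℝ a c : ℝ)| ≤ ‖a‖ ^ (p - 1) * ‖c‖ := by
  rcases eq_or_ne a 0 with rfl | ha
  · simp [inner_zero_left]
    positivity
  · have hA : (0:ℝ) < ‖a‖ := norm_pos_iff.2 ha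
    have h1 : ‖a‖ ^ (p - 2) * ‖a‖ = ‖a‖ ^ (p - 1) := by
      rw [← Real.rpow_add_one hA.ne' (p - 2)]
      ring_nf
    calc |‖a‖ ^ (p - 2) * (inner ℝ a c : ℝ)| = ‖a‖ ^ (p - 2) * |(inner ℝ a c : ℝ)| := by
          rw [abs_mul, abs_of_nonneg (Real.rpow_nonneg (norm_nonneg a) _)]
      _ ≤ ‖a‖ ^ (p - 2) * (‖a‖ * ‖c‖) := by
          exact mul_le_mul_of_nonneg_left (abs_real_inner_le_norm a c)
            (Real.rpow_nonneg (norm_nonneg a) _)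
      _ = ‖a‖ ^ (p - 1) * ‖c‖ := by rw [← h1]; ring

lemma pLap_mono {E : Type*} [NormedAddCommGroup E] [InnerProductSpace ℝ E]
    {p : ℝ} (hp : 1 < p) (a b : E) :
    ‖b‖ ^ (p - 2) * (inner ℝ b (a - b) : ℝ) ≤ ‖a‖ ^ (p - 2) * (inner ℝ a (a - b) : ℝ) := by
  rcases eq_or_ne a 0 with rfl | ha
  · have h0 : (inner ℝ b (0 - b) : ℝ) = -(‖b‖ * ‖b‖) := by
      simp [inner_sub_right, real_inner_self_eq_norm_mul_norm, pow_two]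
    rw [h0]
    simp only [inner_zero_left, mul_zero]
    have : (0:ℝ) ≤ ‖b‖ ^ (p-2) * (‖b‖ * ‖b‖) := by positivity
    nlinarith
  rcases eq_or_ne b 0 with rfl | hb
  · have h0 : (inner ℝ a (a - 0) : ℝ) = ‖a‖ * ‖a‖ := by
      simp [real_inner_self_eq_norm_mul_norm, pow_two]
    rw [h0]
    simp only [norm_zero, inner_zero_left, mul_zero]
    positivity
  · have hA : (0:ℝ) < ‖a‖ := norm_pos_iff.2 ha
    have hB : (0:ℝ) < ‖b‖ := norm_pos_iff.2 hb
    set A := ‖a‖ with hAdef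
    set B := ‖b‖ with hBdef
    set c : ℝ := inner ℝ a b with hcdef
    have hca : (inner ℝ a (a - b) : ℝ) = A * A - c := by
      simp [inner_sub_right, real_inner_self_eq_norm_mul_norm, pow_two, hAdef, hcdef]
    have hcb : (inner ℝ b (a - b) : ℝ) = c - B * B := by
      simp [inner_sub_right, real_inner_self_eq_norm_mul_norm, real_inner_comm b a, hcdef, pow_two, hBdef]
    rw [hca, hcb]
    have hc : c ≤ A * B := real_inner_le_norm a b
    have ha2 : (0:ℝ) ≤ A ^ (p-2) := Real.rpow_nonneg hA.le _
    have hb2 : (0:ℝ) ≤ B ^ (p-2) := Real.rpow_nonneg hB.le _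
    have h1 : A ^ (p-2) * A = A ^ (p-1) := by
      rw [← Real.rpow_add_one hA.ne' (p - 2)]; ring_nf
    have h2 : B ^ (p-2) * B = B ^ (p-1) := by
      rw [← Real.rpow_add_one hB.ne' (p - 2)]; ring_nf
    have hmono : 0 ≤ (A ^ (p-1) - B ^ (p-1)) * (A - B) := by
      rcases le_total A B with h | h
      · have := Real.rpow_le_rpow hA.le h (by linarith : (0:ℝ) ≤ p - 1)
        nlinarith
      · have := Real.rpow_le_rpow hB.le h (by linarith : (0:ℝ) ≤ p - 1)
        nlinarith
    have key : (A ^ (p-2) + B ^ (p-2)) * c ≤ (A ^ (p-2) + B ^ (p-2)) * (A * B) :=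
      mul_le_mul_of_nonneg_left hc (by positivity)
    nlinarith [key, hmono, h1, h2, mul_le_mul_of_nonneg_left hc ha2,
      mul_le_mul_of_nonneg_left hc hb2]

set_option maxHeartbeats 2000000 in
/-- **Weak comparison principle** (used twice in the proof of Lemma 2.3). Let `v` be a
C¹ positive distributional subsolution and `u` a C¹ positive distributional
supersolution of `−Δ_p w = C w^{−γ}` in an open set `Ω` (tested against nonnegative
Lipschitz functions with compact support in `Ω`). If `ε > 0` is such that the closure of
`{v > u + ε}` is compact and contained in `Ω`, then `v ≤ u + ε` on `Ω`. -/
theorem weak_comparison_principle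
    (N : ℕ) (hN : 2 ≤ N) (p γ C : ℝ) (hp : 1 < p) (hγ : 1 < γ) (hC : 0 < C)
    (Ω : Set (EuclideanSpace ℝ (Fin N))) (hΩ : IsOpen Ω)
    (v u : EuclideanSpace ℝ (Fin N) → ℝ)
    -- `v` and `u` are C¹ and positive on `Ω`
    (hv_C1 : ContDiffOn ℝ 1 v Ω) (hv_pos : ∀ x ∈ Ω, 0 < v x)
    (hu_C1 : ContDiffOn ℝ 1 u Ω) (hu_pos : ∀ x ∈ Ω, 0 < u x)
    -- `v` is a distributional subsolution of `−Δ_p v = C v^{−γ}` in `Ω`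
    (hv_sub : ∀ φ : EuclideanSpace ℝ (Fin N) → ℝ, (∃ K : NNReal, LipschitzWith K φ) →
      (∀ x, 0 ≤ φ x) → HasCompactSupport φ → tsupport φ ⊆ Ω →
      ∫ x in Ω, ‖gradient v x‖ ^ (p - 2) * (inner ℝ (gradient v x) (gradient φ x) : ℝ)
        ≤ C * ∫ x in Ω, v x ^ (-γ) * φ x)
    -- `u` is a distributional supersolution of `−Δ_p u = C u^{−γ}` in `Ω`
    (hu_super : ∀ φ : EuclideanSpace ℝ (Fin N) → ℝ, (∃ K : NNReal, LipschitzWith K φ) →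
      (∀ x, 0 ≤ φ x) → HasCompactSupport φ → tsupport φ ⊆ Ω →
      C * ∫ x in Ω, u x ^ (-γ) * φ x
        ≤ ∫ x in Ω, ‖gradient u x‖ ^ (p - 2) * (inner ℝ (gradient u x) (gradient φ x) : ℝ))
    -- the set `{v > u + ε}` has compact closure contained in `Ω`
    (ε : ℝ) (hε : 0 < ε)
    (h_cpt : IsCompact (closure {x ∈ Ω | u x + ε < v x}))
    (h_sub : closure {x ∈ Ω | u x + ε < v x} ⊆ Ω) :
    ∀ x ∈ Ω, v x ≤ u x + ε := by
  by_contra hcon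
  push_neg at hcon
  obtain ⟨x₀, hx₀Ω, hx₀⟩ := hcon
  -- continuity facts
  have hvc : ContinuousOn v Ω := hv_C1.continuousOn
  have huc : ContinuousOn u Ω := hu_C1.continuousOn
  have hvuc : ContinuousOn (fun x => v x - u x) Ω := hvc.sub huc
  have hΩm : MeasurableSet Ω := hΩ.measurableSet
  -- choose a good level t
  have hcnt := Measure.countable_meas_level_set_pos₀
    (μ := volume.restrict Ω) ((hvuc.aemeasurable hΩm).nullMeasurable)
  have hIoo_unc : ¬ (Set.Ioo ε (v x₀ - u x₀)).Countable := by
    intro hcnt'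
    have h1 : ε < v x₀ - u x₀ := by linarith
    have h2 := Cardinal.mk_Ioo_real h1
    have h3 : (Cardinal.mk (Set.Ioo ε (v x₀ - u x₀))) ≤ Cardinal.aleph0 :=
      Cardinal.mk_le_aleph0_iff.2 hcnt'.to_subtype
    rw [h2] at h3
    exact absurd h3 Cardinal.aleph0_lt_continuum.not_ge
  obtain ⟨t, htmem, htnull⟩ :
      ∃ t, t ∈ Set.Ioo ε (v x₀ - u x₀) ∧
        (volume.restrict Ω) {x | v x - u x = t} = 0 := by
    by_contra hno
    push_neg at hno
    refine hIoo_unc (hcnt.mono ?_)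
    intro τ hτ
    simp only [Set.mem_setOf_eq]
    exact pos_iff_ne_zero.2 (hno τ hτ)
  obtain ⟨htε, htx₀⟩ := htmem
  have ht0 : 0 < t := lt_trans hε htε
  -- the set S and its closure
  set S : Set (EuclideanSpace ℝ (Fin N)) := {x | x ∈ Ω ∧ t < v x - u x} with hSdef
  have hSopen : IsOpen S := by
    have hEq : S = Ω ∩ (fun x => v x - u x) ⁻¹' (Set.Ioi t) := rfl
    rw [hEq]
    exact hvuc.isOpen_inter_preimage hΩ isOpen_Ioi
  have hx₀S : x₀ ∈ S := ⟨hx₀Ω, htx₀⟩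
  have hSsub : S ⊆ {x ∈ Ω | u x + ε < v x} := fun x hx => ⟨hx.1, by
    have := hx.2; linarith⟩
  set K : Set (EuclideanSpace ℝ (Fin N)) := closure S with hKdef
  have hKcpt : IsCompact K := h_cpt.of_isClosed_subset isClosed_closure (closure_mono hSsub)
  have hKΩ : K ⊆ Ω := (closure_mono hSsub).trans h_sub
  have hx₀K : x₀ ∈ K := subset_closure hx₀S
  have hKm : MeasurableSet K := isClosed_closure.measurableSet
  have hSm : MeasurableSet S := hSopen.measurableSet
  -- thickening
  obtain ⟨δ, hδpos, hδ⟩ := hKcpt.exists_cthickening_subset_open hΩ hKΩ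
  set K₂ : Set (EuclideanSpace ℝ (Fin N)) := Metric.cthickening δ K with hK₂def
  have hK₂Ω : K₂ ⊆ Ω := hδ
  have hballK₂ : ∀ x ∈ K, Metric.ball x δ ⊆ K₂ := by
    intro x hx y hy
    refine Metric.thickening_subset_cthickening δ K ?_
    rw [Metric.mem_thickening_iff_infDist_lt ⟨x, hx⟩]
    exact lt_of_le_of_lt (Metric.infDist_le_dist_of_mem hx) hy
  -- differentiability
  have hvdiff : ∀ x ∈ Ω, DifferentiableAt ℝ v x := fun x hx =>
    (hv_C1.differentiableOn one_ne_zero).differentiableAt (hΩ.mem_nhds hx)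
  have hudiff : ∀ x ∈ Ω, DifferentiableAt ℝ u x := fun x hx =>
    (hu_C1.differentiableOn one_ne_zero).differentiableAt (hΩ.mem_nhds hx)
  set wfun : EuclideanSpace ℝ (Fin N) → ℝ := fun x => v x - u x - t with hwdef
  have hwdiff : ∀ x ∈ Ω, DifferentiableAt ℝ wfun x := fun x hx =>
    ((hvdiff x hx).sub (hudiff x hx)).sub_const t
  have hwC1 : ContDiffOn ℝ 1 wfun Ω := (hv_C1.sub hu_C1).sub contDiffOn_const
  have hwc : ContinuousOn wfun Ω := hwC1.continuousOn
  have hfdc : ContinuousOn (fderiv ℝ wfun) Ω := hwC1.continuousOn_fderiv_of_isOpen hΩ le_rfl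
  obtain ⟨C₀, hC₀⟩ := (hKcpt.cthickening).exists_bound_of_continuousOn (hfdc.mono hK₂Ω)
  set L₁ : ℝ := max C₀ 0 with hL₁def
  have hL₁0 : 0 ≤ L₁ := le_max_right _ _
  obtain ⟨B, hB⟩ := hKcpt.exists_bound_of_continuousOn (hwc.mono hKΩ)
  have hB0 : 0 ≤ B := le_trans (norm_nonneg _) (hB x₀ hx₀K)
  -- the test function φ
  set φ : EuclideanSpace ℝ (Fin N) → ℝ := Set.indicator Ω (fun x => max (wfun x) 0) with hφdef
  have hφ_nonneg : ∀ x, 0 ≤ φ x := fun x =>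
    Set.indicator_nonneg (fun y _ => le_max_right _ _) x
  have hφΩ : ∀ x ∈ Ω, φ x = max (wfun x) 0 := fun x hx => Set.indicator_of_mem hx _
  have hφS : ∀ x ∈ S, φ x = wfun x := by
    intro x hx
    rw [hφΩ x hx.1]
    exact max_eq_left (by have := hx.2; simp only [hwdef]; linarith)
  have hφ0 : ∀ x, x ∉ S → φ x = 0 := by
    intro x hx
    by_cases hxΩ : x ∈ Ω
    · rw [hφΩ x hxΩ]
      refine max_eq_right ?_
      have : ¬ t < v x - u x := fun h => hx ⟨hxΩ, h⟩
      simp only [hwdef]; linarith [not_lt.1 this]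
    · exact Set.indicator_of_notMem hxΩ _
  have hsupp : Function.support φ ⊆ S := by
    intro x hx
    by_contra h
    exact hx (hφ0 x h)
  have htsupp : tsupport φ ⊆ K := closure_mono hsupp
  have hφcpt : HasCompactSupport φ := hKcpt.of_isClosed_subset isClosed_closure htsupp
  have hφΩsupp : tsupport φ ⊆ Ω := htsupp.trans hKΩ
  -- Lipschitz property
  have hφB : ∀ x, φ x ≤ B := by
    intro x
    by_cases hxS : x ∈ S
    · rw [hφS x hxS]
      exact le_trans (le_abs_self _) ((Real.norm_eq_abs _).symm ▸ hB x (subset_closure hxS))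
    · rw [hφ0 x hxS]; exact hB0
  set L : ℝ := max L₁ (B / δ) with hLdef
  have hL0 : 0 ≤ L := le_trans hL₁0 (le_max_left _ _)
  have hlip_half : ∀ x y, φ y ≤ φ x → φ x - φ y ≤ L * dist x y := by
    intro x y hle
    by_cases hx0 : φ x ≤ 0
    · have hx0' : φ x = 0 := le_antisymm hx0 (hφ_nonneg x)
      have hy0' : φ y = 0 := le_antisymm (hx0' ▸ hle) (hφ_nonneg y)
      rw [hx0', hy0', sub_zero]
      positivity
    push_neg at hx0
    have hxS : x ∈ S := by
      by_contra h
      rw [hφ0 x h] at hx0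
      exact lt_irrefl _ hx0
    rcases le_or_gt δ (dist x y) with hd | hd
    · calc φ x - φ y ≤ φ x := by linarith [hφ_nonneg y]
        _ ≤ B := hφB x
        _ = (B / δ) * δ := by field_simp
        _ ≤ (B / δ) * dist x y := mul_le_mul_of_nonneg_left hd (div_nonneg hB0 hδpos.le)
        _ ≤ L * dist x y := mul_le_mul_of_nonneg_right (le_max_right _ _) dist_nonneg
    · have hyball : y ∈ Metric.ball x δ := by rwa [Metric.mem_ball, dist_comm]
      have hxball : x ∈ Metric.ball x δ := Metric.mem_ball_self hδpos
      have hballsub : Metric.ball x δ ⊆ K₂ := hballK₂ x (subset_closure hxS)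
      have hballΩ : Metric.ball x δ ⊆ Ω := hballsub.trans hK₂Ω
      have key : ‖wfun x - wfun y‖ ≤ L₁ * ‖x - y‖ :=
        (convex_ball x δ).norm_image_sub_le_of_norm_fderiv_le
          (fun z hz => hwdiff z (hballΩ hz))
          (fun z hz => le_trans (hC₀ z (hballsub hz)) (le_max_left _ _))
          hyball hxball
      have habs : |φ x - φ y| ≤ |wfun x - wfun y| := by
        rw [hφΩ x (hballΩ hxball), hφΩ y (hballΩ hyball)]
        exact abs_max_sub_max_le_abs _ _ _
      calc φ x - φ y ≤ |φ x - φ y| := le_abs_self _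
        _ ≤ |wfun x - wfun y| := habs
        _ ≤ L₁ * ‖x - y‖ := by rw [← Real.norm_eq_abs]; exact key
        _ = L₁ * dist x y := by rw [dist_eq_norm]
        _ ≤ L * dist x y := mul_le_mul_of_nonneg_right (le_max_left _ _) dist_nonneg
  have hlip : LipschitzWith L.toNNReal φ := by
    apply LipschitzWith.of_dist_le_mul
    intro x y
    rw [Real.coe_toNNReal _ hL0, Real.dist_eq]
    rcases le_total (φ y) (φ x) with h | h
    · rw [abs_of_nonneg (by linarith)]
      exact hlip_half x y h
    · rw [abs_of_nonpos (by linarith)]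
      have := hlip_half y x h
      rw [dist_comm] at this
      linarith
  -- gradient identities
  set G : EuclideanSpace ℝ (Fin N) → EuclideanSpace ℝ (Fin N) :=
    fun x => gradient v x - gradient u x with hGdef
  have hgradS : ∀ x ∈ S, gradient φ x = G x := by
    intro x hx
    have hev : φ =ᶠ[nhds x] wfun :=
      Filter.eventuallyEq_of_mem (hSopen.mem_nhds hx) (fun y hy => hφS y hy)
    rw [hev.gradient_eq]
    have hxΩ := hx.1
    have hfd : fderiv ℝ wfun x = fderiv ℝ v x - fderiv ℝ u x := by
      have h1 : fderiv ℝ wfun x = fderiv ℝ (fun y => v y - u y) x := fderiv_sub_const t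
      rw [h1, fderiv_fun_sub (hvdiff x hxΩ) (hudiff x hxΩ)]
    simp only [gradient, hGdef, hfd, map_sub]
  have hgrad0 : ∀ x ∈ Ω, v x - u x < t → gradient φ x = 0 := by
    intro x hxΩ hlt
    have hU : IsOpen {y | y ∈ Ω ∧ v y - u y < t} := by
      have hEq : {y | y ∈ Ω ∧ v y - u y < t} = Ω ∩ (fun x => v x - u x) ⁻¹' (Set.Iio t) := rfl
      rw [hEq]
      exact hvuc.isOpen_inter_preimage hΩ isOpen_Iio
    have hev : φ =ᶠ[nhds x] (fun _ => (0:ℝ)) := by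
      refine Filter.eventuallyEq_of_mem (hU.mem_nhds ⟨hxΩ, hlt⟩) ?_
      intro y hy
      rw [hφΩ y hy.1]
      exact max_eq_right (by have := hy.2; simp only [hwdef]; linarith)
    rw [hev.gradient_eq, gradient_fun_const]
  have hae : ∀ᵐ x ∂(volume.restrict Ω), gradient φ x = Set.indicator S G x := by
    rw [ae_iff]
    have hsub2 : {a | ¬ gradient φ a = Set.indicator S G a} ⊆ {x | v x - u x = t} ∪ Ωᶜ := by
      intro x hx
      simp only [Set.mem_setOf_eq] at hx
      by_cases hxΩ : x ∈ Ω
      · left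
        by_contra hne
        rcases lt_or_gt_of_ne hne with hlt | hgt
        · have hxS : x ∉ S := fun h => absurd h.2 (not_lt.2 hlt.le)
          exact hx (by rw [hgrad0 x hxΩ hlt, Set.indicator_of_notMem hxS])
        · have hxS : x ∈ S := ⟨hxΩ, hgt⟩
          exact hx (by rw [hgradS x hxS, Set.indicator_of_mem hxS])
      · exact Or.inr hxΩ
    refine measure_mono_null hsub2 (measure_union_null htnull ?_)
    rw [Measure.restrict_apply' hΩm]
    simp
  -- nice versions of the integrands
  set fv : EuclideanSpace ℝ (Fin N) → ℝ :=
    Set.indicator S (fun y => ‖gradient v y‖ ^ (p - 2) * (inner ℝ (gradient v y) (G y) : ℝ))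
    with hfvdef
  set fu : EuclideanSpace ℝ (Fin N) → ℝ :=
    Set.indicator S (fun y => ‖gradient u y‖ ^ (p - 2) * (inner ℝ (gradient u y) (G y) : ℝ))
    with hfudef
  have hIv : ∫ x in Ω, ‖gradient v x‖ ^ (p - 2) * (inner ℝ (gradient v x) (gradient φ x) : ℝ)
      = ∫ x in Ω, fv x := by
    refine integral_congr_ae ?_
    filter_upwards [hae] with x hx
    rw [hx, hfvdef]
    by_cases hxS : x ∈ S
    · rw [Set.indicator_of_mem hxS, Set.indicator_of_mem hxS]
    · rw [Set.indicator_of_notMem hxS, Set.indicator_of_notMem hxS, inner_zero_right, mul_zero]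
  have hIu : ∫ x in Ω, ‖gradient u x‖ ^ (p - 2) * (inner ℝ (gradient u x) (gradient φ x) : ℝ)
      = ∫ x in Ω, fu x := by
    refine integral_congr_ae ?_
    filter_upwards [hae] with x hx
    rw [hx, hfudef]
    by_cases hxS : x ∈ S
    · rw [Set.indicator_of_mem hxS, Set.indicator_of_mem hxS]
    · rw [Set.indicator_of_notMem hxS, Set.indicator_of_notMem hxS, inner_zero_right, mul_zero]
  -- continuity of gradients
  have hgradvc : ContinuousOn (gradient v) Ω := by
    have h1 : ContinuousOn (fderiv ℝ v) Ω := hv_C1.continuousOn_fderiv_of_isOpen hΩ le_rfl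
    exact (InnerProductSpace.toDual ℝ _).symm.continuous.comp_continuousOn h1
  have hgraduc : ContinuousOn (gradient u) Ω := by
    have h1 : ContinuousOn (fderiv ℝ u) Ω := hu_C1.continuousOn_fderiv_of_isOpen hΩ le_rfl
    exact (InnerProductSpace.toDual ℝ _).symm.continuous.comp_continuousOn h1
  have hGc : ContinuousOn G Ω := hgradvc.sub hgraduc
  -- integrability helper
  have hKfin : (volume.restrict Ω) K < ⊤ := by
    refine lt_of_le_of_lt ?_ (hKcpt.measure_lt_top (μ := volume))
    rw [Measure.restrict_apply' hΩm]
    exact measure_mono Set.inter_subset_left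
  have integrable_of_bound : ∀ (f : EuclideanSpace ℝ (Fin N) → ℝ) (M : ℝ),
      AEMeasurable f (volume.restrict Ω) →
      (∀ x ∈ Ω, |f x| ≤ K.indicator (fun _ => M) x) →
      Integrable f (volume.restrict Ω) := by
    intro f M hm hbd
    have hgint : Integrable (K.indicator (fun _ => M)) (volume.restrict Ω) :=
      (integrable_indicator_iff (f := fun _ => M) hKm).2 (integrableOn_const hKfin.ne)
    refine Integrable.mono' hgint hm.aestronglyMeasurable ?_
    filter_upwards [ae_restrict_mem hΩm] with x hx
    rw [Real.norm_eq_abs]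
    exact hbd x hx
  -- bounds on gradients
  obtain ⟨Mv, hMv⟩ := hKcpt.exists_bound_of_continuousOn (hgradvc.mono hKΩ)
  obtain ⟨Mu, hMu⟩ := hKcpt.exists_bound_of_continuousOn (hgraduc.mono hKΩ)
  have hMv0 : 0 ≤ Mv := le_trans (norm_nonneg _) (hMv x₀ hx₀K)
  have hMu0 : 0 ≤ Mu := le_trans (norm_nonneg _) (hMu x₀ hx₀K)
  set M₁ : ℝ := (Mv ^ (p-1) + Mu ^ (p-1)) * (Mv + Mu) with hM₁def
  have hM₁0 : 0 ≤ M₁ := by positivity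
  have hGbd : ∀ x ∈ K, ‖G x‖ ≤ Mv + Mu := by
    intro x hx
    calc ‖G x‖ ≤ ‖gradient v x‖ + ‖gradient u x‖ := norm_sub_le _ _
      _ ≤ Mv + Mu := add_le_add (hMv x hx) (hMu x hx)
  have bfv : ∀ x ∈ Ω, |fv x| ≤ K.indicator (fun _ => M₁) x := by
    intro x _
    by_cases hxS : x ∈ S
    · have hxK : x ∈ K := subset_closure hxS
      rw [Set.indicator_of_mem hxK, hfvdef, Set.indicator_of_mem hxS]
      calc |‖gradient v x‖ ^ (p - 2) * (inner ℝ (gradient v x) (G x) : ℝ)|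
          ≤ ‖gradient v x‖ ^ (p - 1) * ‖G x‖ := pLap_bound _ _
        _ ≤ Mv ^ (p-1) * (Mv + Mu) := by
            refine mul_le_mul (Real.rpow_le_rpow (norm_nonneg _) (hMv x hxK) (by linarith))
              (hGbd x hxK) (norm_nonneg _) (Real.rpow_nonneg hMv0 _)
        _ ≤ M₁ := by nlinarith [Real.rpow_nonneg hMu0 (p-1)]
    · rw [hfvdef, Set.indicator_of_notMem hxS, abs_zero]
      exact Set.indicator_nonneg (fun _ _ => hM₁0) x
  have bfu : ∀ x ∈ Ω, |fu x| ≤ K.indicator (fun _ => M₁) x := by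
    intro x _
    by_cases hxS : x ∈ S
    · have hxK : x ∈ K := subset_closure hxS
      rw [Set.indicator_of_mem hxK, hfudef, Set.indicator_of_mem hxS]
      calc |‖gradient u x‖ ^ (p - 2) * (inner ℝ (gradient u x) (G x) : ℝ)|
          ≤ ‖gradient u x‖ ^ (p - 1) * ‖G x‖ := pLap_bound _ _
        _ ≤ Mu ^ (p-1) * (Mv + Mu) := by
            refine mul_le_mul (Real.rpow_le_rpow (norm_nonneg _) (hMu x hxK) (by linarith))
              (hGbd x hxK) (norm_nonneg _) (Real.rpow_nonneg hMu0 _)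
        _ ≤ M₁ := by nlinarith [Real.rpow_nonneg hMv0 (p-1)]
    · rw [hfudef, Set.indicator_of_notMem hxS, abs_zero]
      exact Set.indicator_nonneg (fun _ _ => hM₁0) x
  have hfvm : AEMeasurable fv (volume.restrict Ω) := by
    refine AEMeasurable.indicator ?_ hSm
    exact ((measurable_rpow_const' (p-2)).comp_aemeasurable
      (hgradvc.norm.aemeasurable hΩm)).mul ((hgradvc.inner hGc).aemeasurable hΩm)
  have hfum : AEMeasurable fu (volume.restrict Ω) := by
    refine AEMeasurable.indicator ?_ hSm
    exact ((measurable_rpow_const' (p-2)).comp_aemeasurable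
      (hgraduc.norm.aemeasurable hΩm)).mul ((hgraduc.inner hGc).aemeasurable hΩm)
  have hfv_int : Integrable fv (volume.restrict Ω) := integrable_of_bound fv M₁ hfvm bfv
  have hfu_int : Integrable fu (volume.restrict Ω) := integrable_of_bound fu M₁ hfum bfu
  have hfufv : ∀ x, fu x ≤ fv x := by
    intro x
    by_cases hxS : x ∈ S
    · rw [hfudef, hfvdef, Set.indicator_of_mem hxS, Set.indicator_of_mem hxS]
      exact pLap_mono hp (gradient v x) (gradient u x)
    · rw [hfudef, hfvdef, Set.indicator_of_notMem hxS, Set.indicator_of_notMem hxS]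
  -- main chain of inequalities
  have h1 := hv_sub φ ⟨L.toNNReal, hlip⟩ hφ_nonneg hφcpt hφΩsupp
  have h2 := hu_super φ ⟨L.toNNReal, hlip⟩ hφ_nonneg hφcpt hφΩsupp
  rw [hIv] at h1
  rw [hIu] at h2
  have h3 : ∫ x in Ω, fu x ≤ ∫ x in Ω, fv x := integral_mono hfu_int hfv_int hfufv
  have hJ : ∫ x in Ω, u x ^ (-γ) * φ x ≤ ∫ x in Ω, v x ^ (-γ) * φ x :=
    le_of_mul_le_mul_left (by linarith) hC
  -- integrability of the right-hand sides
  have hKne : K.Nonempty := ⟨x₀, hx₀K⟩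
  obtain ⟨zv, hzvK, hzv⟩ := hKcpt.exists_isMinOn hKne (hvc.mono hKΩ)
  obtain ⟨zu, hzuK, hzu⟩ := hKcpt.exists_isMinOn hKne (huc.mono hKΩ)
  have hzv0 : 0 < v zv := hv_pos zv (hKΩ hzvK)
  have hzu0 : 0 < u zu := hu_pos zu (hKΩ hzuK)
  set M₂ : ℝ := (v zv ^ (-γ) + u zu ^ (-γ)) * B with hM₂def
  have hM₂0 : 0 ≤ M₂ := by
    have := Real.rpow_nonneg hzv0.le (-γ)
    have := Real.rpow_nonneg hzu0.le (-γ)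
    positivity
  set jv : EuclideanSpace ℝ (Fin N) → ℝ := fun x => v x ^ (-γ) * φ x with hjvdef
  set ju : EuclideanSpace ℝ (Fin N) → ℝ := fun x => u x ^ (-γ) * φ x with hjudef
  have bjv : ∀ x ∈ Ω, |jv x| ≤ K.indicator (fun _ => M₂) x := by
    intro x hx
    by_cases hxS : x ∈ S
    · have hxK : x ∈ K := subset_closure hxS
      rw [Set.indicator_of_mem hxK]
      have h1 : |jv x| = v x ^ (-γ) * φ x := by
        rw [abs_mul, abs_of_nonneg (Real.rpow_nonneg (hv_pos x hx).le _),
          abs_of_nonneg (hφ_nonneg x)]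
      rw [h1]
      have h2 : v x ^ (-γ) ≤ v zv ^ (-γ) :=
        Real.rpow_le_rpow_of_nonpos hzv0 (hzv hxK) (by linarith)
      have h3 : φ x ≤ B := hφB x
      have h4 : 0 ≤ v x ^ (-γ) := Real.rpow_nonneg (hv_pos x hx).le _
      have h5 : 0 ≤ u zu ^ (-γ) := Real.rpow_nonneg hzu0.le _
      nlinarith [hφ_nonneg x, Real.rpow_nonneg hzv0.le (-γ)]
    · have : jv x = 0 := by rw [hjvdef]; simp [hφ0 x hxS]
      rw [this, abs_zero]
      exact Set.indicator_nonneg (fun _ _ => hM₂0) x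
  have bju : ∀ x ∈ Ω, |ju x| ≤ K.indicator (fun _ => M₂) x := by
    intro x hx
    by_cases hxS : x ∈ S
    · have hxK : x ∈ K := subset_closure hxS
      rw [Set.indicator_of_mem hxK]
      have h1 : |ju x| = u x ^ (-γ) * φ x := by
        rw [abs_mul, abs_of_nonneg (Real.rpow_nonneg (hu_pos x hx).le _),
          abs_of_nonneg (hφ_nonneg x)]
      rw [h1]
      have h2 : u x ^ (-γ) ≤ u zu ^ (-γ) :=
        Real.rpow_le_rpow_of_nonpos hzu0 (hzu hxK) (by linarith)
      have h3 : φ x ≤ B := hφB x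
      have h4 : 0 ≤ u x ^ (-γ) := Real.rpow_nonneg (hu_pos x hx).le _
      have h5 : 0 ≤ v zv ^ (-γ) := Real.rpow_nonneg hzv0.le _
      nlinarith [hφ_nonneg x, Real.rpow_nonneg hzu0.le (-γ)]
    · have : ju x = 0 := by rw [hjudef]; simp [hφ0 x hxS]
      rw [this, abs_zero]
      exact Set.indicator_nonneg (fun _ _ => hM₂0) x
  have hφcont : Continuous φ := hlip.continuous
  have hjvm : AEMeasurable jv (volume.restrict Ω) := by
    refine AEMeasurable.mul ?_ (hφcont.aemeasurable)
    exact ((hvc.rpow_const (fun x hx => Or.inl (hv_pos x hx).ne')).aemeasurable hΩm)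
  have hjum : AEMeasurable ju (volume.restrict Ω) := by
    refine AEMeasurable.mul ?_ (hφcont.aemeasurable)
    exact ((huc.rpow_const (fun x hx => Or.inl (hu_pos x hx).ne')).aemeasurable hΩm)
  have hjv_int : Integrable jv (volume.restrict Ω) := integrable_of_bound jv M₂ hjvm bjv
  have hju_int : Integrable ju (volume.restrict Ω) := integrable_of_bound ju M₂ hjum bju
  -- the difference function
  set h : EuclideanSpace ℝ (Fin N) → ℝ := fun x => ju x - jv x with hhdef
  have hh_int : Integrable h (volume.restrict Ω) := hju_int.sub hjv_int
  have hhnn : 0 ≤ᵐ[volume.restrict Ω] h := by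
    filter_upwards [ae_restrict_mem hΩm] with x hx
    by_cases hxS : x ∈ S
    · have hlt : u x < v x := by have := hxS.2; linarith
      have hrp : v x ^ (-γ) ≤ u x ^ (-γ) :=
        Real.rpow_le_rpow_of_nonpos (hu_pos x hx) hlt.le (by linarith)
      have := mul_le_mul_of_nonneg_right hrp (hφ_nonneg x)
      simp only [hhdef, hjudef, hjvdef, Pi.zero_apply]
      linarith
    · simp only [hhdef, hjudef, hjvdef, Pi.zero_apply, hφ0 x hxS, mul_zero, sub_zero, le_refl]
  -- strict positivity at x₀
  have hφx₀ : 0 < φ x₀ := by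
    rw [hφS x₀ hx₀S]
    simp only [hwdef]
    linarith
  have hux₀ : u x₀ < v x₀ := by linarith
  have hc : 0 < h x₀ := by
    have hrp : v x₀ ^ (-γ) < u x₀ ^ (-γ) :=
      Real.rpow_lt_rpow_of_neg (hu_pos x₀ hx₀Ω) hux₀ (by linarith)
    have := mul_lt_mul_of_pos_right hrp hφx₀
    simp only [hhdef, hjudef, hjvdef]
    linarith
  have hhc : ContinuousOn h Ω := by
    refine ContinuousOn.sub ?_ ?_
    · exact ((huc.rpow_const (fun x hx => Or.inl (hu_pos x hx).ne')).mul
        hφcont.continuousOn)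
    · exact ((hvc.rpow_const (fun x hx => Or.inl (hv_pos x hx).ne')).mul
        hφcont.continuousOn)
  have hcontat : ContinuousAt h x₀ := hhc.continuousAt (hΩ.mem_nhds hx₀Ω)
  have hev2 : ∀ᶠ y in nhds x₀, h x₀ / 2 < h y :=
    hcontat.eventually_const_lt (half_lt_self hc)
  have hevΩ : ∀ᶠ y in nhds x₀, y ∈ Ω := hΩ.eventually_mem hx₀Ω
  obtain ⟨r, hr, hball⟩ := Metric.eventually_nhds_iff_ball.1 (hev2.and hevΩ)
  have hballΩ : Metric.ball x₀ r ⊆ Ω := fun y hy => (hball y hy).2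
  have hI1 : ∫ x in Metric.ball x₀ r, h x ≤ ∫ x in Ω, h x :=
    setIntegral_mono_set hh_int hhnn (HasSubset.Subset.eventuallyLE hballΩ)
  have hIball : IntegrableOn h (Metric.ball x₀ r) volume :=
    IntegrableOn.mono_set hh_int hballΩ
  have hI2 : ∫ _x in Metric.ball x₀ r, (h x₀ / 2) ≤ ∫ x in Metric.ball x₀ r, h x := by
    refine setIntegral_mono_on (integrableOn_const measure_ball_lt_top.ne) hIball
      measurableSet_ball ?_
    intro x hx
    exact (hball x hx).1.le
  have hI3 : 0 < ∫ _x in Metric.ball x₀ r, (h x₀ / 2) := by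
    rw [setIntegral_const]
    have hpos : 0 < (volume (Metric.ball x₀ r)).toReal :=
      ENNReal.toReal_pos (ne_of_gt (Metric.measure_ball_pos volume x₀ hr))
        measure_ball_lt_top.ne
    have : 0 < h x₀ / 2 := half_pos hc
    positivity
  have hfinal : 0 < ∫ x in Ω, h x := lt_of_lt_of_le hI3 (le_trans hI2 hI1)
  have heq : ∫ x in Ω, h x = (∫ x in Ω, ju x) - ∫ x in Ω, jv x := integral_sub hju_int hjv_int
  rw [heq] at hfinal
  have : (∫ x in Ω, ju x) ≤ ∫ x in Ω, jv x := hJ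
  linarith
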